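/- Under the assumptions below, f(t) > 0 for every real t with λₙ < t < 1, and the function t ↦ log(1 − f(t)^{1/N}) is integrable on the interval (λₙ, 1) (the integrand having at worst a logarithmic singularity at t = 1). -/

import Mathlib

open scoped BigOperators
open MeasureTheory Real Set

/-- Under the assumptions (\ref{thmassump}) of the paper, `f(t) > 0` for
`λₙ < t < 1`, and `t ↦ log(1 − f(t)^{1/N})` is integrable on `(λₙ, 1)`. -/
theorem stmt10 (N n : ℕ) (hN : 2 ≤ N) (hn : 1 ≤ n)
    (lam : Fin n → ℂ) (hne : ∀ i, lam i ≠ 0) (hinj : Function.Injective lam)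
    (f : ℝ → ℝ) (hf : ∀ t : ℝ, (f t : ℂ) = (t : ℂ) * ∏ i, ((t : ℂ) - lam i))
    (ln : ℝ) (hlam : lam ⟨n - 1, by omega⟩ = (ln : ℂ)) (hln0 : 0 < ln) (hln1 : ln < 1)
    (hother : ∀ i : Fin n, i ≠ ⟨n - 1, by omega⟩ →
      ∀ r : ℝ, lam i = (r : ℂ) → ¬(0 < r ∧ r < 1))
    (hbound : ∀ t : ℝ, 0 ≤ t → t < 1 → |f t| < 1) (hf1 : 0 < f 1)
    (c : ℝ) (hc0 : 0 < c) (hc : (c : ℂ) = (-1 : ℂ) ^ (n - 1) * ∏ i, lam i) :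
    (∀ t : ℝ, ln < t → t < 1 → 0 < f t) ∧
    IntegrableOn (fun t : ℝ => Real.log (1 - (f t) ^ ((1 : ℝ) / (N : ℝ))))
      (Set.Ioo ln 1) := by
  classical
  have hNpos : (0 : ℝ) < (N : ℝ) := by exact_mod_cast (by omega : 0 < N)
  have hNexp : (0 : ℝ) < (1 : ℝ) / (N : ℝ) := by positivity
  -- continuity of f
  have hfc : Continuous f := by
    have hfe : f = fun t : ℝ => ((t : ℂ) * ∏ i, ((t : ℂ) - lam i)).re := by
      funext t
      rw [← hf t, Complex.ofReal_re]
    rw [hfe]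
    exact Complex.continuous_re.comp
      (Complex.continuous_ofReal.mul (continuous_finset_prod _ fun i _ =>
        Complex.continuous_ofReal.sub continuous_const))
  have hfln : f ln = 0 := by
    have h := hf ln
    rw [Finset.prod_eq_zero (Finset.mem_univ (⟨n - 1, by omega⟩ : Fin n))
      (by rw [hlam]; ring)] at h
    simpa using h
  -- f does not vanish on (ln, 1)
  have hfne : ∀ t : ℝ, ln < t → t < 1 → f t ≠ 0 := by
    intro t ht1 ht2 h0
    have h := hf t
    rw [h0] at h
    push_cast at h
    rcases mul_eq_zero.mp h.symm with h' | h'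
    · have : t = 0 := by exact_mod_cast h'
      linarith
    · obtain ⟨i, -, hi⟩ := Finset.prod_eq_zero_iff.mp h'
      have hit : lam i = (t : ℂ) := by
        rw [sub_eq_zero] at hi; exact hi.symm
      by_cases hii : i = (⟨n - 1, by omega⟩ : Fin n)
      · rw [hii, hlam] at hit
        have : (ln : ℝ) = t := by exact_mod_cast hit
        linarith
      · exact hother i hii t hit ⟨by linarith, ht2⟩
  -- positivity of f on (ln, 1)
  have hpos : ∀ t : ℝ, ln < t → t < 1 → 0 < f t := by
    intro t ht1 ht2
    by_contra hle
    push_neg at hle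
    have hlt : f t < 0 := lt_of_le_of_ne hle (hfne t ht1 ht2)
    obtain ⟨s, hs, hfs⟩ := intermediate_value_Icc ht2.le hfc.continuousOn
      (⟨hlt.le, hf1.le⟩ : (0 : ℝ) ∈ Icc (f t) (f 1))
    have hs1 : s < 1 := lt_of_le_of_ne hs.2 (by rintro rfl; exact hf1.ne' hfs)
    have hst : t < s := lt_of_le_of_ne hs.1 (by rintro rfl; exact (hfne t ht1 ht2) hfs)
    exact hfne s (ht1.trans hst) hs1 hfs
  refine ⟨hpos, ?_⟩
  -- polynomial 1 - f
  set Q : Polynomial ℂ :=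
    Polynomial.C 1 - Polynomial.X * ∏ i, (Polynomial.X - Polynomial.C (lam i)) with hQdef
  have hQeval : ∀ t : ℝ, Q.eval (t : ℂ) = ((1 - f t : ℝ) : ℂ) := by
    intro t
    simp only [hQdef, Polynomial.eval_sub, Polynomial.eval_one, Polynomial.eval_mul,
      Polynomial.eval_X, Polynomial.eval_prod, Polynomial.eval_C]
    rw [show ((t : ℂ) * ∏ i, ((t : ℂ) - lam i)) = ((f t : ℝ) : ℂ) from (hf t).symm]
    push_cast
    ring
  have hQne : Q ≠ 0 := by
    intro h
    have h2 := hQeval ln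
    rw [h, hfln] at h2
    simp at h2
  set k : ℕ := Q.rootMultiplicity 1 with hk
  set R : Polynomial ℂ := Q /ₘ (Polynomial.X - Polynomial.C 1) ^ k with hRdef
  have hfac : (Polynomial.X - Polynomial.C 1) ^ k * R = Q :=
    Q.pow_mul_divByMonic_rootMultiplicity_eq 1
  have hR1 : R.eval 1 ≠ 0 := Polynomial.eval_divByMonic_pow_rootMultiplicity_ne_zero 1 hQne
  set r : ℝ := ‖R.eval 1‖ with hr
  have hr0 : 0 < r := norm_pos_iff.mpr hR1
  have habs : Continuous fun t : ℝ => ‖R.eval (t : ℂ)‖ :=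
    continuous_norm.comp (R.continuous.comp Complex.continuous_ofReal)
  have hmem : {t : ℝ | r / 2 < ‖R.eval (t : ℂ)‖} ∈ nhds (1 : ℝ) := by
    refine (isOpen_lt continuous_const habs).mem_nhds ?_
    show r / 2 < ‖R.eval ((1 : ℝ) : ℂ)‖
    simpa [hr] using half_lt_self hr0
  obtain ⟨δ, hδ0, hδ⟩ := Metric.mem_nhds_iff.mp hmem
  set a : ℝ := max ln (1 - δ) with hadef
  have haln : ln ≤ a := le_max_left _ _
  have ha1 : a < 1 := max_lt hln1 (by linarith)
  -- lower bound for 1 - f t on (a, 1)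
  have hlow : ∀ t ∈ Ioo a (1 : ℝ), (1 - t) ^ k * (r / 2) ≤ 1 - f t := by
    intro t ht
    have ht1 : t < 1 := ht.2
    have htln : ln < t := lt_of_le_of_lt haln ht.1
    have hft1 : f t < 1 := (abs_lt.mp (hbound t (by linarith) ht1)).2
    have hQt : Q.eval (t : ℂ) = ((t : ℂ) - 1) ^ k * R.eval (t : ℂ) := by
      rw [← hfac]; simp
    have habs1 : ‖Q.eval (t : ℂ)‖ = 1 - f t := by
      rw [hQeval t, Complex.norm_real, Real.norm_eq_abs, abs_of_nonneg (by linarith)]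
    have habs2 : ‖((t : ℂ) - 1)‖ = 1 - t := by
      rw [show ((t : ℂ) - 1) = ((t - 1 : ℝ) : ℂ) by push_cast; ring, Complex.norm_real, Real.norm_eq_abs,
        abs_of_nonpos (by linarith)]
      ring
    have hRt : r / 2 < ‖R.eval (t : ℂ)‖ := by
      apply hδ
      rw [Metric.mem_ball, Real.dist_eq, abs_of_nonpos (by linarith)]
      have : 1 - δ < t := lt_of_le_of_lt (le_max_right _ _) ht.1
      linarith
    calc (1 - t) ^ k * (r / 2) ≤ (1 - t) ^ k * ‖R.eval (t : ℂ)‖ := by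
          apply mul_le_mul_of_nonneg_left hRt.le (pow_nonneg (by linarith) k)
      _ = ‖Q.eval (t : ℂ)‖ := by
          rw [hQt, norm_mul, norm_pow, habs2]
      _ = 1 - f t := habs1
  -- parameters for the dominating function
  set m : ℕ := k + 1 with hm
  have hm0 : (0 : ℝ) < (m : ℝ) := by positivity
  set e : ℝ := (k : ℝ) * (-(1 : ℝ) / (m : ℝ)) with he
  have he1 : (-1 : ℝ) < e := by
    rw [he]
    have hkm : (k : ℝ) / (m : ℝ) < 1 := by
      rw [div_lt_one hm0]
      exact_mod_cast Nat.lt_succ_self k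
    calc (-1 : ℝ) < -((k : ℝ) / (m : ℝ)) := by linarith
      _ = (k : ℝ) * (-(1 : ℝ) / (m : ℝ)) := by ring
  set C : ℝ := (r / (2 * N)) ^ (-(1 : ℝ) / (m : ℝ)) with hC
  set g : ℝ → ℝ := fun t => (m : ℝ) * (C * (1 - t) ^ e) with hg
  -- the pointwise bound on (a, 1)
  have hdom : ∀ t ∈ Ioo a (1 : ℝ),
      ‖Real.log (1 - f t ^ ((1 : ℝ) / (N : ℝ)))‖ ≤ g t := by
    intro t ht
    have ht1 : t < 1 := ht.2
    have htln : ln < t := lt_of_le_of_lt haln ht.1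
    have hft0 : 0 < f t := hpos t htln ht1
    have hft1 : f t < 1 := (abs_lt.mp (hbound t (by linarith) ht1)).2
    set y : ℝ := f t ^ ((1 : ℝ) / (N : ℝ)) with hy
    have hy0 : 0 < y := Real.rpow_pos_of_pos hft0 _
    have hy1 : y < 1 := Real.rpow_lt_one hft0.le hft1 hNexp
    have hyN : y ^ (N : ℕ) = f t := by
      rw [hy, ← Real.rpow_natCast (f t ^ ((1 : ℝ) / (N : ℝ))) N, ← Real.rpow_mul hft0.le,
        one_div, inv_mul_cancel₀ (ne_of_gt hNpos), Real.rpow_one]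
    -- 1 - f t ≤ N * (1 - y)
    have hgeom : (1 - y) * (∑ i ∈ Finset.range N, y ^ i) = 1 - f t := by
      have h := geom_sum_mul y N
      rw [← hyN]
      linear_combination -h
    have hsum : (∑ i ∈ Finset.range N, y ^ i) ≤ (N : ℝ) := by
      calc (∑ i ∈ Finset.range N, y ^ i) ≤ ∑ i ∈ Finset.range N, (1 : ℝ) :=
            Finset.sum_le_sum fun i _ => pow_le_one₀ hy0.le hy1.le
        _ = (N : ℝ) := by simp
    have hfy : (1 - f t) / (N : ℝ) ≤ 1 - y := by
      rw [div_le_iff₀ hNpos]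
      calc 1 - f t = (1 - y) * (∑ i ∈ Finset.range N, y ^ i) := hgeom.symm
        _ ≤ (1 - y) * (N : ℝ) := mul_le_mul_of_nonneg_left hsum (by linarith)
    -- the lower bound L
    set L : ℝ := (1 - t) ^ k * (r / (2 * N)) with hL
    have hLpos : 0 < L := by
      rw [hL]
      exact mul_pos (pow_pos (by linarith) k) (by positivity)
    have hLle : L ≤ 1 - y := by
      have h := hlow t ht
      have hLeq : L = ((1 - t) ^ k * (r / 2)) / (N : ℝ) := by
        rw [hL]; field_simp
      rw [hLeq]
      refine le_trans ?_ hfy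
      gcongr
    have h1y0 : 0 < 1 - y := lt_of_lt_of_le hLpos hLle
    -- norm equals -log(1-y)
    have hlogle : Real.log (1 - y) ≤ 0 := Real.log_nonpos (by linarith) (by linarith)
    have hnorm : ‖Real.log (1 - y)‖ = -Real.log (1 - y) := by
      rw [Real.norm_eq_abs, abs_of_nonpos hlogle]
    -- -log(1-y) ≤ -log L ≤ m * L^(-1/m)
    have hmono : Real.log L ≤ Real.log (1 - y) := Real.log_le_log hLpos hLle
    have hrpow : Real.log (L ^ (-(1 : ℝ) / (m : ℝ))) ≤ L ^ (-(1 : ℝ) / (m : ℝ)) := by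
      have h := Real.log_le_sub_one_of_pos
        (Real.rpow_pos_of_pos hLpos (-(1 : ℝ) / (m : ℝ)))
      linarith
    rw [Real.log_rpow hLpos] at hrpow
    have hkey : -Real.log L ≤ (m : ℝ) * L ^ (-(1 : ℝ) / (m : ℝ)) := by
      have h2 : -Real.log L = (m : ℝ) * (-(1 : ℝ) / (m : ℝ) * Real.log L) := by
        field_simp
      rw [h2]
      exact mul_le_mul_of_nonneg_left hrpow hm0.le
    -- compute L ^ (-(1)/m)
    have hLrpow : L ^ (-(1 : ℝ) / (m : ℝ)) = C * (1 - t) ^ e := by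
      rw [hL, Real.mul_rpow (pow_nonneg (by linarith) k) (by positivity), ← Real.rpow_natCast (1 - t) k,
        ← Real.rpow_mul (by linarith), hC, he]
      ring
    rw [hnorm]
    calc -Real.log (1 - y) ≤ -Real.log L := by linarith
      _ ≤ (m : ℝ) * L ^ (-(1 : ℝ) / (m : ℝ)) := hkey
      _ = (m : ℝ) * (C * (1 - t) ^ e) := by rw [hLrpow]
      _ = g t := rfl
  -- g is integrable on (a, 1)
  have hgint : IntegrableOn g (Ioo a 1) volume := by
    have h1 : IntervalIntegrable (fun x : ℝ => x ^ e) volume (1 - a) (1 - 1) :=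
      intervalIntegral.intervalIntegrable_rpow' he1
    have h2 := h1.comp_sub_left 1
    rw [sub_sub_cancel, sub_sub_cancel] at h2
    rw [intervalIntegrable_iff_integrableOn_Ioo_of_le ha1.le] at h2
    have h3 : IntegrableOn (fun t : ℝ => (m : ℝ) * (C * (1 - t) ^ e)) (Ioo a 1) volume :=
      (h2.const_mul C).const_mul (m : ℝ)
    exact h3
  -- measurability
  have hcont2 : ContinuousOn (fun t : ℝ => Real.log (1 - f t ^ ((1 : ℝ) / (N : ℝ))))
      (Ioo a 1) := by
    apply ContinuousOn.log
    · exact continuousOn_const.sub (hfc.continuousOn.rpow_const fun x _ => Or.inr hNexp.le)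
    · intro x hx
      have hx0 : 0 < f x := hpos x (lt_of_le_of_lt haln hx.1) hx.2
      have hx1 : f x < 1 :=
        (abs_lt.mp (hbound x (by linarith [lt_of_le_of_lt haln hx.1]) hx.2)).2
      have : f x ^ ((1 : ℝ) / (N : ℝ)) < 1 := Real.rpow_lt_one hx0.le hx1 hNexp
      have : (0 : ℝ) < 1 - f x ^ ((1 : ℝ) / (N : ℝ)) := by linarith
      exact ne_of_gt this
  have hmeas : AEStronglyMeasurable (fun t : ℝ => Real.log (1 - f t ^ ((1 : ℝ) / (N : ℝ))))
      (volume.restrict (Ioo a 1)) :=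
    hcont2.aestronglyMeasurable measurableSet_Ioo
  -- integrability on (a, 1) by domination
  have hint2 : IntegrableOn (fun t : ℝ => Real.log (1 - f t ^ ((1 : ℝ) / (N : ℝ))))
      (Ioo a 1) volume := by
    refine Integrable.mono' hgint hmeas ?_
    refine (ae_restrict_iff' measurableSet_Ioo).mpr (Filter.Eventually.of_forall ?_)
    exact fun t ht => hdom t ht
  -- integrability on (ln, a] by continuity
  have hcont1 : ContinuousOn (fun t : ℝ => Real.log (1 - f t ^ ((1 : ℝ) / (N : ℝ))))
      (Icc ln a) := by
    apply ContinuousOn.log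
    · exact continuousOn_const.sub (hfc.continuousOn.rpow_const fun x _ => Or.inr hNexp.le)
    · intro x hx
      have hxa : x < 1 := lt_of_le_of_lt hx.2 ha1
      have hx0 : 0 ≤ f x := by
        rcases eq_or_lt_of_le hx.1 with h | h
        · rw [← h, hfln]
        · exact (hpos x h hxa).le
      have hx1 : f x < 1 := (abs_lt.mp (hbound x (by linarith [hx.1]) hxa)).2
      have : f x ^ ((1 : ℝ) / (N : ℝ)) < 1 := Real.rpow_lt_one hx0 hx1 hNexp
      have : (0 : ℝ) < 1 - f x ^ ((1 : ℝ) / (N : ℝ)) := by linarith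
      exact ne_of_gt this
  have hint1 : IntegrableOn (fun t : ℝ => Real.log (1 - f t ^ ((1 : ℝ) / (N : ℝ))))
      (Ioc ln a) volume :=
    (hcont1.integrableOn_Icc).mono_set Ioc_subset_Icc_self
  -- combine
  have hsub : Ioo ln 1 ⊆ Ioc ln a ∪ Ioo a 1 := by
    intro t ht
    rcases le_or_gt t a with h | h
    · exact Or.inl ⟨ht.1, h⟩
    · exact Or.inr ⟨h, ht.2⟩
  exact (hint1.union hint2).mono_set hsub
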